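/- Let p be a prime with p ≡ 1 (mod 4). Then the double sum over all t in ZMod p and all x in ZMod p of χ(x³ − t·(t − 1)·x) equals 2p. -/

import Mathlib

open Finset

section aux
variable (p : ℕ) [Fact p.Prime]

lemma qc_ringChar (hp2 : p ≠ 2) : ringChar (ZMod p) ≠ 2 := by
  rw [ZMod.ringChar_zmod_n]; exact hp2

lemma jac_aux (hp2 : p ≠ 2) {c : ZMod p} (hc : c ≠ 0) :
    ∑ x : ZMod p, quadraticChar (ZMod p) x * quadraticChar (ZMod p) (c - x) =
      - quadraticChar (ZMod p) (-1) := by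
  have hF := qc_ringChar p hp2
  have key : jacobiSum (quadraticChar (ZMod p)) (quadraticChar (ZMod p)) =
      - quadraticChar (ZMod p) (-1) := by
    have := jacobiSum_nontrivial_inv (quadraticChar_ne_one hF)
    rwa [(quadraticChar_isQuadratic (ZMod p)).inv] at this
  calc ∑ x : ZMod p, quadraticChar (ZMod p) x * quadraticChar (ZMod p) (c - x)
      = ∑ v : ZMod p, quadraticChar (ZMod p) (c * v) * quadraticChar (ZMod p) (c - c * v) := by
        exact (Fintype.sum_equiv (Equiv.mulLeft₀ c hc) _ _ (fun v => rfl)).symm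
    _ = ∑ v : ZMod p, (quadraticChar (ZMod p) c)^2 *
          (quadraticChar (ZMod p) v * quadraticChar (ZMod p) (1 - v)) := by
        apply Finset.sum_congr rfl
        intro v _
        have : c - c * v = c * (1 - v) := by ring
        rw [this, map_mul, map_mul]; ring
    _ = - quadraticChar (ZMod p) (-1) := by
        rw [← Finset.mul_sum, quadraticChar_sq_one hc]
        rw [one_mul]
        exact key
end aux

section aux2
variable (p : ℕ) [Fact p.Prime]

lemma hp2_of_hp4 (hp4 : p % 4 = 1) : p ≠ 2 := by omega

lemma qc_neg_one' (hp4 : p % 4 = 1) : quadraticChar (ZMod p) (-1) = 1 := by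
  have h : IsSquare (-1 : ZMod p) := by
    rw [FiniteField.isSquare_neg_one_iff, ZMod.card]
    omega
  exact (quadraticChar_one_iff_isSquare (neg_ne_zero.mpr one_ne_zero)).mpr h

end aux2

section aux3
variable (p : ℕ) [Fact p.Prime]

lemma sum_sub_sq (hp4 : p % 4 = 1) (c : ZMod p) :
    ∑ s : ZMod p, quadraticChar (ZMod p) (c - s ^ 2) =
      if c = 0 then ((p : ℤ) - 1) else -1 := by
  have hp2 := hp2_of_hp4 p hp4
  have hF := qc_ringChar p hp2
  set χ := quadraticChar (ZMod p) with hχ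
  have step1 : ∑ s : ZMod p, χ (c - s ^ 2) =
      ∑ u : ZMod p, (χ u + 1) * χ (c - u) := by
    rw [← Finset.sum_fiberwise' Finset.univ (fun s : ZMod p => s ^ 2)
      (fun u => χ (c - u))]
    refine Finset.sum_congr rfl fun u _ => ?_
    rw [Finset.sum_const, nsmul_eq_mul]
    congr 1
    have := quadraticChar_card_sqrts hF u
    rw [← this]
    norm_cast
    congr 1
    rw [Set.toFinset_setOf]
  have step2 : ∑ u : ZMod p, χ (c - u) = 0 :=
    (Fintype.sum_equiv (Equiv.subLeft c) (fun u => χ (c - u)) χ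
      (fun u => rfl)).trans (quadraticChar_sum_zero hF)
  have expand : ∀ u : ZMod p, (χ u + 1) * χ (c - u) =
      χ u * χ (c - u) + χ (c - u) := fun u => by ring
  rw [step1]
  simp_rw [expand]
  rw [Finset.sum_add_distrib, step2, add_zero]
  by_cases hc : c = 0
  · subst hc
    simp only [if_pos rfl]
    have : ∀ u : ZMod p, χ u * χ (0 - u) = χ (-1) * (χ u) ^ 2 := by
      intro u
      have : (0 : ZMod p) - u = -1 * u := by ring
      rw [this, map_mul]; ring
    simp_rw [this, if_true]
    rw [hχ, qc_neg_one' p hp4, ← hχ]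
    simp_rw [one_mul]
    rw [Finset.sum_eq_sum_sdiff_singleton_add (Finset.mem_univ (0 : ZMod p))
      (fun u => (χ u) ^ 2)]
    have h0 : (χ 0) ^ 2 = 0 := by
      rw [hχ, quadraticChar_zero]; ring
    have h1 : ∀ u ∈ Finset.univ \ {(0 : ZMod p)}, (χ u) ^ 2 = 1 := by
      intro u hu
      exact quadraticChar_sq_one
        (by simpa using (Finset.mem_sdiff.mp hu).2)
    rw [h0, add_zero, Finset.sum_congr rfl h1, Finset.sum_const, nsmul_eq_mul,
      mul_one, Finset.card_sdiff_of_subset (Finset.subset_univ _), Finset.card_univ,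
      ZMod.card, Finset.card_singleton]
    have hp1 : 1 ≤ p := by omega
    push_cast [Nat.cast_sub hp1]
    ring
  · rw [if_neg hc, jac_aux p hp2 hc, qc_neg_one' p hp4]

end aux3

section aux4
variable (p : ℕ) [Fact p.Prime]

lemma zmod_two_ne_zero (hp4 : p % 4 = 1) : (2 : ZMod p) ≠ 0 := by
  have hple := (Fact.out : p.Prime).two_le
  have : ((2 : ℕ) : ZMod p) ≠ 0 := by
    rw [Ne, ZMod.natCast_eq_zero_iff]
    intro h
    have := Nat.le_of_dvd (by norm_num) h
    omega
  simpa using this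

lemma qc_root (hp4 : p % 4 = 1) :
    ∃ a : ZMod p, a ^ 2 = -(2⁻¹ : ZMod p) ^ 2 ∧ quadraticChar (ZMod p) a = 1 := by
  have hple := (Fact.out : p.Prime).two_le
  have hp2 := hp2_of_hp4 p hp4
  have h2 : (2 : ZMod p) ≠ 0 := zmod_two_ne_zero p hp4
  obtain ⟨b, hb⟩ : IsSquare (-1 : ZMod p) := by
    rw [FiniteField.isSquare_neg_one_iff, ZMod.card]; omega
  have hb2 : b ^ 2 = -1 := by rw [sq]; exact hb.symm
  have hb0 : b ≠ 0 := by
    intro h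
    apply (one_ne_zero : (1 : ZMod p) ≠ 0)
    have h1 : (-1 : ZMod p) = 0 := by rw [← hb2, h]; ring
    exact neg_eq_zero.mp h1
  refine ⟨b * 2⁻¹, by rw [mul_pow, hb2]; ring, ?_⟩
  -- χ b = χ 2
  haveI : Fact (2 < p) := ⟨by omega⟩
  have hne : (-1 : ZMod p) ≠ 1 := CharP.neg_one_ne_one (ZMod p) p
  have hdiv : p / 2 = 2 * (p / 4) := by omega
  have hbsq : IsSquare b ↔ p % 8 = 1 := by
    rw [ZMod.euler_criterion p hb0, hdiv, pow_mul, hb2,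
      neg_one_pow_eq_one_iff_even hne, Nat.even_iff]
    omega
  have h2sq : IsSquare (2 : ZMod p) ↔ p % 8 = 1 := by
    rw [ZMod.exists_sq_eq_two_iff hp2]
    omega
  have hbb : quadraticChar (ZMod p) b = quadraticChar (ZMod p) 2 := by
    by_cases h8 : p % 8 = 1
    · rw [(quadraticChar_one_iff_isSquare hb0).mpr (hbsq.mpr h8),
        (quadraticChar_one_iff_isSquare h2).mpr (h2sq.mpr h8)]
    · rw [quadraticChar_neg_one_iff_not_isSquare.mpr (fun h => h8 (hbsq.mp h)),
        quadraticChar_neg_one_iff_not_isSquare.mpr (fun h => h8 (h2sq.mp h))]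
  have hinv : quadraticChar (ZMod p) 2⁻¹ = quadraticChar (ZMod p) 2 := by
    have hmul : quadraticChar (ZMod p) 2 * quadraticChar (ZMod p) 2⁻¹ = 1 := by
      rw [← map_mul, mul_inv_cancel₀ h2, map_one]
    rcases quadraticChar_dichotomy h2 with h | h <;> rw [h] at hmul ⊢ <;> omega
  rw [map_mul, hbb, hinv, ← sq, quadraticChar_sq_one h2]

end aux4

theorem first_moment_rank_one_family (p : ℕ) [Fact p.Prime] (hp4 : p % 4 = 1) :
    ∑ t : ZMod p, ∑ x : ZMod p,
      quadraticChar (ZMod p) (x ^ 3 - t * (t - 1) * x) = 2 * (p : ℤ) := by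
  have hp2 := hp2_of_hp4 p hp4
  have hF := qc_ringChar p hp2
  have h2 : (2 : ZMod p) ≠ 0 := zmod_two_ne_zero p hp4
  set χ := quadraticChar (ZMod p) with hχ
  rw [Finset.sum_comm]
  have key : ∀ x : ZMod p, ∑ t : ZMod p, χ (x ^ 3 - t * (t - 1) * x) =
      χ x * (if x ^ 2 + (2⁻¹ : ZMod p) ^ 2 = 0 then ((p : ℤ) - 1) else -1) := by
    intro x
    have hrw : ∀ t : ZMod p, x ^ 3 - t * (t - 1) * x =
        x * ((x ^ 2 + (2⁻¹ : ZMod p) ^ 2) - (t - 2⁻¹) ^ 2) := by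
      intro t; field_simp; ring
    simp_rw [hrw, map_mul]
    rw [← Finset.mul_sum]
    congr 1
    rw [show (∑ t : ZMod p, χ ((x ^ 2 + (2⁻¹ : ZMod p) ^ 2) - (t - 2⁻¹) ^ 2)) =
        ∑ s : ZMod p, χ ((x ^ 2 + (2⁻¹ : ZMod p) ^ 2) - s ^ 2) from
      Fintype.sum_equiv (Equiv.subRight (2⁻¹ : ZMod p)) _ _ (fun t => rfl)]
    exact sum_sub_sq p hp4 _
  simp_rw [key]
  obtain ⟨a, ha2, haχ⟩ := qc_root p hp4
  have split : ∀ x : ZMod p,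
      χ x * (if x ^ 2 + (2⁻¹ : ZMod p) ^ 2 = 0 then ((p : ℤ) - 1) else -1) =
      (if x ^ 2 + (2⁻¹ : ZMod p) ^ 2 = 0 then (p : ℤ) * χ x else 0) - χ x := by
    intro x; split_ifs with h <;> ring
  simp_rw [split]
  rw [Finset.sum_sub_distrib, quadraticChar_sum_zero hF, sub_zero,
    ← Finset.sum_filter]
  have ha0 : a ≠ 0 := by
    intro h
    rw [h] at ha2
    exact pow_ne_zero 2 (inv_ne_zero h2) (by linear_combination ha2)
  have hane : a ≠ -a := by
    intro h
    apply ha0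
    have h2a : a * (2 : ZMod p) = 0 := by linear_combination h
    rcases mul_eq_zero.mp h2a with h' | h'
    · exact h'
    · exact absurd h' h2
  have hfil : Finset.univ.filter (fun x : ZMod p => x ^ 2 + (2⁻¹ : ZMod p) ^ 2 = 0)
      = {a, -a} := by
    ext x
    simp only [Finset.mem_filter, Finset.mem_univ, true_and, Finset.mem_insert,
      Finset.mem_singleton]
    constructor
    · intro h
      have hx : x ^ 2 = a ^ 2 := by rw [ha2]; linear_combination h
      exact sq_eq_sq_iff_eq_or_eq_neg.mp hx
    · rintro (rfl | rfl)
      · linear_combination ha2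
      · linear_combination ha2
  rw [hfil, Finset.sum_pair hane]
  have hnega : χ (-a) = 1 := by
    have : (-a : ZMod p) = -1 * a := by ring
    rw [this, map_mul, qc_neg_one' p hp4, one_mul, haχ]
  rw [haχ, hnega]
  ring
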